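/- Let A be an abelian group with the property that whenever A contains elements of orders k and l, it contains an element of order lcm(k,l) (e.g. A a subgroup of the units of a field). Let G be a finite group such that Hom(G,A) is finite. Then O(G) = ⋂_{φ ∈ Hom(G,A)} ker φ is the smallest subgroup M of G with [G,G] ≤ M ≤ G such that A has an element of order exp(G/M). -/

import Mathlib

/-- Realized orders are closed under finite lcm's, given the lcm hypothesis. -/
private lemma aux_exists_orderOf_lcm {A : Type*} [CommGroup A]
    (hA : ∀ a b : A, 0 < orderOf a → 0 < orderOf b →
      ∃ c : A, orderOf c = Nat.lcm (orderOf a) (orderOf b))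
    {ι : Type*} [DecidableEq ι] (s : Finset ι) (f : ι → ℕ)
    (h : ∀ i ∈ s, ∃ a : A, orderOf a = f i ∧ 0 < f i) :
    ∃ a : A, orderOf a = s.lcm f ∧ 0 < s.lcm f := by
  induction s using Finset.induction with
  | empty => exact ⟨1, by simp⟩
  | @insert i s hi ih =>
    obtain ⟨a, haf, hapos⟩ := h i (Finset.mem_insert_self i s)
    obtain ⟨b, hbf, hbpos⟩ := ih fun j hj => h j (Finset.mem_insert_of_mem hj)
    obtain ⟨c, hc⟩ := hA a b (haf ▸ hapos) (hbf ▸ hbpos)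
    refine ⟨c, ?_, ?_⟩
    · rw [Finset.lcm_insert, hc, haf, hbf]; rfl
    · rw [Finset.lcm_insert]
      show 0 < Nat.lcm (f i) (s.lcm f)
      exact Nat.pos_of_ne_zero (Nat.lcm_ne_zero hapos.ne' hbpos.ne')

/-- Separation of points of a finite abelian group by homomorphisms into a group
containing an element whose order is the exponent. -/
private lemma aux_sep {A H : Type*} [CommGroup A] [CommGroup H] [Finite H]
    (a : A) (ha : orderOf a = Monoid.exponent H) {x : H} (hx : x ≠ 1) :
    ∃ φ : H →* A, φ x ≠ 1 := by
  classical
  obtain ⟨ι, _, n, hn, h⟩ := CommGroup.equiv_prod_multiplicative_zmod_of_finite H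
  let e := h.some
  obtain ⟨i, hi⟩ : ∃ i, e x i ≠ 1 := by
    contrapose! hx
    exact (MulEquiv.map_eq_one_iff e).mp (funext hx)
  have hdvd : n i ∣ Monoid.exponent H := by
    have : n i = orderOf (e.symm <| Pi.mulSingle i <| .ofAdd 1) := by
      simpa only [MulEquiv.orderOf_eq, orderOf_piMulSingle, orderOf_ofAdd_eq_addOrderOf]
        using (ZMod.addOrderOf_one (n i)).symm
    exact this ▸ Monoid.order_dvd_exponent _
  haveI : NeZero (n i) := ⟨by have := hn i; omega⟩
  have hexp : orderOf a ≠ 0 := by rw [ha]; exact Monoid.exponent_ne_zero_of_finite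
  have hord : orderOf (a ^ (orderOf a / n i)) = n i :=
    orderOf_pow_orderOf_div hexp (ha ▸ hdvd)
  have hcard : Nat.card (Multiplicative (ZMod (n i))) = n i := by
    simp [Nat.card_eq_fintype_card]
  obtain ⟨φi, hφi⟩ := IsCyclic.exists_apply_ne_one (G := Multiplicative (ZMod (n i))) (G' := A)
    ⟨a ^ (orderOf a / n i), by
      rw [hcard]
      have h' := IsPrimitiveRoot.orderOf (a ^ (orderOf a / n i))
      rwa [hord] at h'⟩ hi
  exact ⟨(φi.comp (Pi.evalMonoidHom (fun i => Multiplicative (ZMod (n i))) i)).comp e, by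
    simpa using hφi⟩

open scoped commutatorElement

theorem stmt_7 {A : Type*} [CommGroup A] (G : Type*) [Group G] [Finite G]
    [Finite (G →* A)]
    (hA : ∀ a b : A, 0 < orderOf a → 0 < orderOf b →
      ∃ c : A, orderOf c = Nat.lcm (orderOf a) (orderOf b))
    (M : Subgroup G) [M.Normal] :
    (commutator G ≤ M ∧ ∃ a : A, orderOf a = Monoid.exponent (G ⧸ M)) ↔
      (⨅ φ : G →* A, φ.ker) ≤ M := by
  classical
  constructor
  · rintro ⟨hcomm, a, ha⟩ g hg
    letI : CommGroup (G ⧸ M) :=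
      { (inferInstance : Group (G ⧸ M)) with
        mul_comm := by
          intro x y
          refine QuotientGroup.induction_on x fun p => QuotientGroup.induction_on y fun q => ?_
          have h : ⁅q⁻¹, p⁻¹⁆ ∈ M := by
            apply hcomm
            rw [commutator_def]
            exact Subgroup.commutator_mem_commutator (Subgroup.mem_top _) (Subgroup.mem_top _)
          rw [← QuotientGroup.mk_mul, ← QuotientGroup.mk_mul, QuotientGroup.eq]
          convert h using 1
          group }
    by_contra hgM
    have hx : ((g : G ⧸ M)) ≠ 1 := by
      rwa [ne_eq, QuotientGroup.eq_one_iff]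
    obtain ⟨χ, hχ⟩ := aux_sep a ha hx
    have := Subgroup.mem_iInf.mp hg (χ.comp (QuotientGroup.mk' M))
    rw [MonoidHom.mem_ker, MonoidHom.comp_apply] at this
    exact hχ this
  · intro hOM
    set O := ⨅ φ : G →* A, φ.ker with hO
    haveI : O.Normal := by
      refine ⟨fun x hx g => ?_⟩
      rw [hO, Subgroup.mem_iInf] at hx ⊢
      intro φ
      have := hx φ
      rw [MonoidHom.mem_ker] at this ⊢
      simp [this]
    haveI : Finite (G ⧸ O) := Quotient.finite _
    haveI := Fintype.ofFinite (G →* A)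
    haveI := Fintype.ofFinite (G ⧸ O)
    have hgO : ∀ g : G, g ∈ O ↔ ∀ φ : G →* A, φ g = 1 := by
      intro g
      simp [hO, Subgroup.mem_iInf, MonoidHom.mem_ker]
    refine ⟨le_trans (le_iInf fun φ => Abelianization.commutator_subset_ker φ) hOM, ?_⟩
    -- exponent of G ⧸ O is realized in A
    have hx : ∀ x : G ⧸ O, ∃ a : A, orderOf a = orderOf x := by
      intro x
      refine QuotientGroup.induction_on x fun g => ?_
      have hord : orderOf ((g : G ⧸ O)) =
          Finset.univ.lcm (fun φ : G →* A => orderOf (φ g)) := by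
        apply Nat.dvd_antisymm
        · apply orderOf_dvd_of_pow_eq_one
          have : ((g ^ Finset.univ.lcm (fun φ : G →* A => orderOf (φ g)) : G) : G ⧸ O) = 1 := by
            rw [QuotientGroup.eq_one_iff, hgO]
            intro φ
            rw [map_pow]
            exact orderOf_dvd_iff_pow_eq_one.mp (Finset.dvd_lcm (Finset.mem_univ φ))
          rw [← this, QuotientGroup.mk_pow]
        · refine Finset.lcm_dvd fun φ _ => ?_
          apply orderOf_dvd_of_pow_eq_one
          rw [← map_pow]
          have : ((g ^ orderOf ((g : G ⧸ O)) : G) : G ⧸ O) = 1 := by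
            rw [QuotientGroup.mk_pow]
            exact pow_orderOf_eq_one _
          exact (hgO _).mp ((QuotientGroup.eq_one_iff _).mp this) φ
      rw [hord]
      obtain ⟨b, hb, _⟩ := aux_exists_orderOf_lcm hA Finset.univ
        (fun φ : G →* A => orderOf (φ g)) (fun φ _ => ⟨φ g, rfl,
          Nat.pos_of_dvd_of_pos (orderOf_map_dvd φ g) (orderOf_pos g)⟩)
      exact ⟨b, hb⟩
    have hexp_eq : Monoid.exponent (G ⧸ O) =
        Finset.univ.lcm (fun x : G ⧸ O => orderOf x) := by
      apply Nat.dvd_antisymm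
      · exact Monoid.exponent_dvd.mpr fun x => Finset.dvd_lcm (Finset.mem_univ x)
      · exact Finset.lcm_dvd fun x _ => Monoid.order_dvd_exponent x
    obtain ⟨c, hc, hcpos⟩ := aux_exists_orderOf_lcm hA Finset.univ
      (fun x : G ⧸ O => orderOf x) (fun x _ => by
        obtain ⟨b, hb⟩ := hx x
        exact ⟨b, hb, orderOf_pos x⟩)
    rw [← hexp_eq] at hc
    have hdvd : Monoid.exponent (G ⧸ M) ∣ Monoid.exponent (G ⧸ O) := by
      rw [Monoid.exponent_dvd]
      intro x
      refine QuotientGroup.induction_on x fun g => ?_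
      have h1 : ((g ^ orderOf ((g : G ⧸ O)) : G) : G ⧸ O) = 1 := by
        rw [QuotientGroup.mk_pow]
        exact pow_orderOf_eq_one _
      have h2 : g ^ orderOf ((g : G ⧸ O)) ∈ M :=
        hOM ((QuotientGroup.eq_one_iff _).mp h1)
      have h3 : ((g : G ⧸ M)) ^ orderOf ((g : G ⧸ O)) = 1 := by
        rw [← QuotientGroup.mk_pow]
        exact (QuotientGroup.eq_one_iff _).mpr h2
      exact dvd_trans (orderOf_dvd_of_pow_eq_one h3) (Monoid.order_dvd_exponent _)
    refine ⟨c ^ (orderOf c / Monoid.exponent (G ⧸ M)), ?_⟩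
    exact orderOf_pow_orderOf_div (by omega) (hc ▸ hdvd)
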